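/- arXiv:1412.8721 — 2 statements merged into one kernel-verified Lean document; each statement's English description precedes it below -/
import Mathlib

section
/- For 1 ≤ k ≤ n, G_{a,b}(n,k;r) = Σ_{i=k}^{n} G_{a,b}(i−1,k−1;r) · ∏_{j=i}^{n−1}(a·j + b·k + (a+b)·r). -/
open Finset

/-- The generalized r-Lah numbers `G_{a,b}(n,k;r)`. -/
def genLah {R : Type*} [CommRing R] (a b : R) (r : ℕ) : ℕ → ℕ → R
  | 0, 0 => 1
  | 0, _ + 1 => 0
  | n + 1, 0 => (a * ((n : R) + (r : R)) + b * (r : R)) * genLah a b r n 0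
  | n + 1, k + 1 => genLah a b r n k +
      (a * (n : R) + b * ((k : R) + 1) + (a + b) * (r : R)) * genLah a b r n (k + 1)

lemma genLah_eq_zero {R : Type*} [CommRing R] (a b : R) (r : ℕ) :
    ∀ n k : ℕ, n < k → genLah a b r n k = 0 := by
  intro n
  induction n with
  | zero =>
    intro k hk
    obtain ⟨m, rfl⟩ : ∃ m, k = m + 1 := ⟨k - 1, by omega⟩
    rfl
  | succ n ih =>
    intro k hk
    obtain ⟨m, rfl⟩ : ∃ m, k = m + 1 := ⟨k - 1, by omega⟩
    rw [genLah, ih m (by omega), ih (m+1) (by omega), mul_zero, add_zero]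

theorem genLah_vertical_recurrence {R : Type*} [CommRing R] (a b : R) (r n k : ℕ)
    (hk : 1 ≤ k) (hkn : k ≤ n) :
    genLah a b r n k =
      ∑ i ∈ Icc k n, genLah a b r (i - 1) (k - 1) *
        ∏ j ∈ Ico i n, (a * (j : R) + b * (k : R) + (a + b) * (r : R)) := by
  obtain ⟨m, rfl⟩ : ∃ m, k = m + 1 := ⟨k - 1, by omega⟩
  induction n, hkn using Nat.le_induction with
  | base =>
    rw [genLah, genLah_eq_zero a b r m (m+1) (by omega), mul_zero, add_zero]
    simp
  | succ n hn ih =>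
    rw [Finset.sum_Icc_succ_top (by omega)]
    simp only [Nat.add_sub_cancel] at ih ⊢
    have hs : ∑ i ∈ Icc (m+1) n, genLah a b r (i - 1) m *
        ∏ j ∈ Ico i (n+1), (a * (j : R) + b * (((m:ℕ)+1 : ℕ) : R) + (a + b) * (r : R)) =
        (∑ i ∈ Icc (m+1) n, genLah a b r (i - 1) m *
          ∏ j ∈ Ico i n, (a * (j : R) + b * (((m:ℕ)+1 : ℕ) : R) + (a + b) * (r : R))) *
          (a * (n : R) + b * (((m:ℕ)+1 : ℕ) : R) + (a + b) * (r : R)) := by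
      rw [Finset.sum_mul]
      refine Finset.sum_congr rfl fun i hi => ?_
      rw [Finset.prod_Ico_succ_top (mem_Icc.mp hi).2, mul_assoc]
    rw [hs, ← ih]
    simp only [genLah, Nat.add_sub_cancel, Finset.Ico_self, Finset.prod_empty, mul_one]
    push_cast
    ring
end

section
/- For all n, r ≥ 0, G_{a,b}(n;r) = Σ_{i=0}^{n} C(n,i) · G_{a,b}(n−i;0) · ∏_{j=0}^{i−1}(a·j + (a+b)·r), where G_{a,b}(n;r) := Σ_{k=0}^{n} G_{a,b}(n,k;r). -/
open Finset

lemma genLah_zero_of_lt {R : Type*} [CommRing R] (a b : R) (r : ℕ) :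
    ∀ n k, n < k → genLah a b r n k = 0 := by
  intro n
  induction n with
  | zero => intro k hk
            match k with
            | k + 1 => rfl
  | succ n ih =>
    intro k hk
    match k, hk with
    | k + 1, hk =>
      show genLah a b r n k + _ * genLah a b r n (k+1) = 0
      rw [ih k (by omega), ih (k+1) (by omega)]
      ring

lemma genLah_step {R : Type*} [CommRing R] (a b : R) (r n k : ℕ) :
    (∑ i ∈ range (n + 2), ((n+1).choose i : R) *
        genLah a b 0 (n + 1 - i) k * ∏ j ∈ range i, (a * j + (a + b) * r))
    = (∑ i ∈ range (n + 1), (n.choose i : R) *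
          ((a * i + (a + b) * r) * genLah a b 0 (n - i) k) *
          ∏ j ∈ range i, (a * j + (a + b) * r))
      + ∑ i ∈ range (n + 1), (n.choose i : R) *
          genLah a b 0 (n + 1 - i) k * ∏ j ∈ range i, (a * j + (a + b) * r) := by
  rw [Finset.sum_range_succ' (fun i => ((n+1).choose i : R) *
        genLah a b 0 (n + 1 - i) k * ∏ j ∈ range i, (a * j + (a + b) * r))]
  have h1 : ∀ i ∈ range (n+1), ((n+1).choose (i+1) : R) *
        genLah a b 0 (n + 1 - (i+1)) k * ∏ j ∈ range (i+1), (a * j + (a + b) * r)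
      = (n.choose i : R) * ((a * i + (a + b) * r) * genLah a b 0 (n - i) k) *
          ∏ j ∈ range i, (a * j + (a + b) * r)
        + (n.choose (i+1) : R) * genLah a b 0 (n - i) k *
          ∏ j ∈ range (i+1), (a * j + (a + b) * r) := by
    intro i hi
    rw [Nat.choose_succ_succ, Nat.succ_sub_succ, prod_range_succ]
    push_cast
    ring
  rw [Finset.sum_congr rfl h1, Finset.sum_add_distrib]
  have h2 : (∑ i ∈ range (n + 1), (n.choose (i+1) : R) * genLah a b 0 (n - i) k *
        ∏ j ∈ range (i+1), (a * j + (a + b) * r))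
      + ((n+1).choose 0 : R) * genLah a b 0 (n + 1 - 0) k * ∏ j ∈ range 0, (a * j + (a + b) * r)
      = ∑ i ∈ range (n + 1), (n.choose i : R) *
          genLah a b 0 (n + 1 - i) k * ∏ j ∈ range i, (a * j + (a + b) * r) := by
    have := (Finset.sum_range_succ' (fun i => (n.choose i : R) *
        genLah a b 0 (n + 1 - i) k * ∏ j ∈ range i, (a * j + (a + b) * r)) (n+1)).symm
    simp only [Nat.succ_sub_succ] at this
    rw [show ((n+1).choose 0 : R) = (n.choose 0 : R) by simp]
    rw [this, Finset.sum_range_succ, Nat.choose_succ_self]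
    push_cast; ring
  rw [add_assoc, h2]

lemma genLah_decomp {R : Type*} [CommRing R] (a b : R) (r : ℕ) :
    ∀ n k, genLah a b r n k = ∑ i ∈ range (n + 1), (n.choose i : R) *
      genLah a b 0 (n - i) k * ∏ j ∈ range i, (a * j + (a + b) * r) := by
  intro n
  induction n with
  | zero => intro k; cases k <;> simp [genLah]
  | succ n ih =>
    intro k
    rw [show n + 1 + 1 = n + 2 from rfl, genLah_step]
    cases k with
    | zero =>
      show (a * ((n : R) + (r : R)) + b * (r : R)) * genLah a b r n 0 = _
      rw [ih 0, Finset.mul_sum, ← Finset.sum_add_distrib]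
      refine Finset.sum_congr rfl fun i hi => ?_
      have hin : i ≤ n := by simpa using Nat.lt_succ_iff.mp (mem_range.mp hi)
      have hsub : n + 1 - i = (n - i) + 1 := by omega
      rw [hsub]
      show _ = _ + (n.choose i : R) *
        ((a * (((n - i : ℕ) : R) + ((0:ℕ) : R)) + b * ((0:ℕ):R)) * genLah a b 0 (n - i) 0) *
        ∏ j ∈ range i, (a * j + (a + b) * r)
      have hc : ((n - i : ℕ) : R) = (n : R) - (i : R) := by
        push_cast [Nat.cast_sub hin]; ring
      rw [hc]
      push_cast
      ring
    | succ k =>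
      show genLah a b r n k + (a * (n : R) + b * ((k : R) + 1) + (a + b) * (r : R)) *
           genLah a b r n (k + 1) = _
      rw [ih k, ih (k+1), Finset.mul_sum, ← Finset.sum_add_distrib, ← Finset.sum_add_distrib]
      refine Finset.sum_congr rfl fun i hi => ?_
      have hin : i ≤ n := Nat.lt_succ_iff.mp (mem_range.mp hi)
      have hsub : n + 1 - i = (n - i) + 1 := by omega
      rw [hsub]
      show _ = _ + (n.choose i : R) *
        (genLah a b 0 (n - i) k + (a * ((n - i : ℕ) : R) + b * ((k : R) + 1) + (a + b) * ((0:ℕ):R)) *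
          genLah a b 0 (n - i) (k + 1)) *
        ∏ j ∈ range i, (a * j + (a + b) * r)
      have hc : ((n - i : ℕ) : R) = (n : R) - (i : R) := by
        push_cast [Nat.cast_sub hin]; ring
      rw [hc]
      push_cast
      ring

theorem genLah_rowSum_from_zero {R : Type*} [CommRing R] (a b : R) (r n : ℕ) :
    (∑ k ∈ range (n + 1), genLah a b r n k) =
      ∑ i ∈ range (n + 1), (n.choose i : R) *
        (∑ k ∈ range (n - i + 1), genLah a b 0 (n - i) k) *
        ∏ j ∈ range i, (a * (j : R) + (a + b) * (r : R)) := by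
  simp_rw [genLah_decomp a b r n]
  rw [Finset.sum_comm]
  refine Finset.sum_congr rfl fun i hi => ?_
  have hsub : range (n - i + 1) ⊆ range (n + 1) := by
    apply range_subset_range.mpr; omega
  have vanish : ∀ k ∈ range (n + 1), k ∉ range (n - i + 1) →
      (n.choose i : R) * genLah a b 0 (n - i) k * ∏ j ∈ range i, (a * j + (a + b) * r) = 0 := by
    intro k hk hk'
    rw [genLah_zero_of_lt a b 0 (n - i) k (by simp at hk hk' ⊢; omega)]
    ring
  rw [← Finset.sum_subset hsub vanish, Finset.mul_sum, Finset.sum_mul]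
end
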